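/- arXiv:2111.03852 — 2 statements merged into one kernel-verified Lean document; each statement's English description precedes it below -/
import Mathlib

section
/- Let $0 < \alpha < n$, $m \geq 1$, and let $A_1, \dots, A_m$ be $n \times n$ invertible real matrices. Let $\alpha_1, \dots, \alpha_m$ be positive reals with $\alpha_1 + \cdots + \alpha_m = n - \alpha$. Then there is a constant $C > 0$ such that for every measurable $f : \mathbb{R}^n \to \mathbb{C}$ and every $x \in \mathbb{R}^n$, $\left| \int_{\mathbb{R}^n} |x - A_1 y|^{-\alpha_1} \cdots |x - A_m y|^{-\alpha_m} f(y)\, dy \right| \leq C \sum_{j=1}^m \int_{\mathbb{R}^n} |A_j^{-1} x - y|^{\alpha - n} |f(y)|\, dy$, whenever the left-hand integral converges absolutely. -/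
open MeasureTheory Metric ENNReal

noncomputable section

/-- `ℝⁿ` with the Euclidean norm. -/
abbrev En (n : ℕ) := EuclideanSpace ℝ (Fin n)

/-- The Muckenhoupt class `𝒜₁`: `w` is a weight and the average of `w` over any ball is
controlled by the essential infimum of `w` over that ball. -/
def IsA1 (n : ℕ) (w : En n → ℝ) : Prop :=
  (∀ x, 0 ≤ w x) ∧ MeasureTheory.LocallyIntegrable w ∧
  ∃ C > 0, ∀ (x : En n) (r : ℝ), 0 < r →
    (∫ y in ball x r, w y) ≤
      C * (volume (ball x r)).toReal * essInf w (volume.restrict (ball x r))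

/-- The Muckenhoupt class `𝒜_p` for `1 < p < ∞`. -/
def IsAp (n : ℕ) (p : ℝ) (w : En n → ℝ) : Prop :=
  (∀ x, 0 ≤ w x) ∧ MeasureTheory.LocallyIntegrable w ∧
  ∃ C > 0, ∀ (x : En n) (r : ℝ), 0 < r →
    ((∫ y in ball x r, w y) / (volume (ball x r)).toReal) *
      ((∫ y in ball x r, w y ^ (-(1 / (p - 1)))) / (volume (ball x r)).toReal) ^ (p - 1) ≤ C

/-- The Muckenhoupt class `𝒜_∞ = ⋃_{1 ≤ p < ∞} 𝒜_p`. -/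
def IsAinfty (n : ℕ) (w : En n → ℝ) : Prop :=
  IsA1 n w ∨ ∃ p, 1 < p ∧ IsAp n p w

/-- The reverse Hölder class `RH_t`. -/
def IsRH (n : ℕ) (t : ℝ) (w : En n → ℝ) : Prop :=
  ∃ C > 0, ∀ (x : En n) (r : ℝ), 0 < r →
    ((∫ y in ball x r, w y ^ t) / (volume (ball x r)).toReal) ^ (1 / t) ≤
      C * ((∫ y in ball x r, w y) / (volume (ball x r)).toReal)

/-- The critical reverse Hölder index `r_w = sup { r > 1 : w ∈ RH_r }`, as an
extended nonnegative real (it may be `∞`). -/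
def rIndex (n : ℕ) (w : En n → ℝ) : ℝ≥0∞ :=
  sSup (ENNReal.ofReal '' {r : ℝ | 1 < r ∧ IsRH n r w})

/-- The quantity `r_w/(r_w - 1)`, interpreted as `1` when `r_w = ∞`. -/
def rRatio (n : ℕ) (w : En n → ℝ) : ℝ :=
  if rIndex n w = ⊤ then 1
  else (rIndex n w).toReal / ((rIndex n w).toReal - 1)

/-- The critical index `q̃_w = inf { q > 1 : w ∈ 𝒜_q }`. -/
def qIndex (n : ℕ) (w : En n → ℝ) : ℝ :=
  sInf {q : ℝ | 1 < q ∧ IsAp n q w}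

/-- The fractional maximal operator `M_β` (for `β = 0` this is the Hardy–Littlewood
maximal operator), `M_β f x = sup_{B ∋ x} |B|^{β/n - 1} ∫_B |f|`. -/
def fracMax (n : ℕ) (β : ℝ) (f : En n → ℝ) (x : En n) : ℝ≥0∞ :=
  ⨆ (z : En n) (r : ℝ) (_ : 0 < r) (_ : x ∈ ball z r),
    (volume (ball z r)) ^ (β / n - 1) * ∫⁻ y in ball z r, ‖f y‖₊

/-- The class `𝒜_{p,q}` for `1 < p ≤ q < ∞`. -/
def IsApq (n : ℕ) (p q : ℝ) (v : En n → ℝ) : Prop :=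
  ∃ C > 0, ∀ (x : En n) (r : ℝ), 0 < r →
    ((∫ y in ball x r, v y ^ q) / (volume (ball x r)).toReal) ^ (1 / q) *
      ((∫ y in ball x r, v y ^ (-(p / (p - 1)))) / (volume (ball x r)).toReal) ^ ((p - 1) / p) ≤ C

/-- The class `𝒜_{1,q}`. -/
def IsA1q (n : ℕ) (q : ℝ) (v : En n → ℝ) : Prop :=
  ∃ C > 0, ∀ (x : En n) (r : ℝ), 0 < r →
    ((∫ y in ball x r, v y ^ q) / (volume (ball x r)).toReal) ^ (1 / q) ≤
      C * essInf v (volume.restrict (ball x r))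

/-- The set `𝒮_N` of Schwartz functions all of whose seminorms of order `≤ N` are `≤ 1`. -/
def SNball (n N : ℕ) : Set (SchwartzMap (En n) ℝ) :=
  {φ | ∀ k l : ℕ, k ≤ N → l ≤ N → SchwartzMap.seminorm ℝ k l φ ≤ 1}

/-- The grand maximal function `𝓜_N f (x) = sup_{t > 0} sup_{φ ∈ 𝒮_N} |(t^{-n} φ(t⁻¹ ·) * f)(x)|`. -/
def grandMax (n N : ℕ) (f : En n → ℝ) (x : En n) : ℝ≥0∞ :=
  ⨆ (t : ℝ) (_ : 0 < t) (φ : SchwartzMap (En n) ℝ) (_ : φ ∈ SNball n N),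
    ENNReal.ofReal |∫ y, t ^ (-(n : ℝ)) * φ (t⁻¹ • (x - y)) * f y|

/-- The weighted `L^p` "norm" `(∫ g^p v)^{1/p}` of an `ℝ≥0∞`-valued function `g`,
with weight `v`. -/
def wNorm (n : ℕ) (v : En n → ℝ) (p : ℝ) (g : En n → ℝ≥0∞) : ℝ≥0∞ :=
  (∫⁻ x, g x ^ p * ENNReal.ofReal (v x)) ^ (1 / p)

end

open MeasureTheory Metric ENNReal in
/-- pointwise domination of the generalized Riesz potential kernel by a sum of
Riesz kernels. -/
theorem stmt0 {n m : ℕ} (hn : 0 < n) (hm : 1 ≤ m) (α : ℝ) (hα0 : 0 < α) (hαn : α < n)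
    (A : Fin m → (En n ≃L[ℝ] En n)) (a : Fin m → ℝ) (ha : ∀ j, 0 < a j)
    (hsum : ∑ j, a j = n - α) :
    ∃ C > 0, ∀ f : En n → ℂ, Measurable f → ∀ x : En n,
      MeasureTheory.Integrable (fun y => (∏ j, ‖x - A j y‖ ^ (-(a j))) • f y) →
      ENNReal.ofReal ‖∫ y, (∏ j, ‖x - A j y‖ ^ (-(a j))) • f y‖ ≤
        ENNReal.ofReal C *
          ∑ j, ∫⁻ y, ENNReal.ofReal (‖(A j).symm x - y‖ ^ (α - n) * ‖f y‖) := by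
  haveI : Nonempty (Fin m) := ⟨⟨0, hm⟩⟩
  haveI : Nontrivial (En n) := by
    haveI : Nonempty (Fin n) := ⟨⟨0, hn⟩⟩
    infer_instance
  set L : Fin m → (En n →L[ℝ] En n) := fun j => ((A j).symm : En n →L[ℝ] En n) with hLdef
  have hL : ∀ j, 0 < ‖L j‖ := by
    intro j
    rw [norm_pos_iff]
    intro h0
    obtain ⟨v, hv⟩ := exists_ne (0 : En n)
    have h1 : (A j).symm v = 0 := by
      have := congrFun (congrArg DFunLike.coe h0) v
      simpa [hLdef] using this
    exact hv ((A j).symm.map_eq_zero_iff.mp h1)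
  set M : Fin m → ℝ := fun j => ‖L j‖ ^ (n - α) with hMdef
  have hM : ∀ j, 0 < M j := fun j => Real.rpow_pos_of_pos (hL j) _
  set C : ℝ := ∑ j, M j with hCdef
  have hC0 : 0 < C := Finset.sum_pos (fun j _ => hM j) Finset.univ_nonempty
  have hMC : ∀ j, M j ≤ C := fun j =>
    Finset.single_le_sum (fun i _ => (hM i).le) (Finset.mem_univ j)
  refine ⟨C, hC0, ?_⟩
  intro f hf x _hint
  -- key pointwise bound
  have key : ∀ y : En n,
      (∏ j, ‖x - A j y‖ ^ (-(a j))) ≤ ∑ j, M j * ‖(A j).symm x - y‖ ^ (α - n) := by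
    intro y
    set d : Fin m → ℝ := fun j => ‖x - A j y‖ with hddef
    set e : Fin m → ℝ := fun j => ‖(A j).symm x - y‖ with hedef
    have hrhs_nonneg : ∀ j, 0 ≤ M j * e j ^ (α - n) := fun j =>
      mul_nonneg (hM j).le (Real.rpow_nonneg (norm_nonneg _) _)
    have hde : ∀ j, e j ≤ ‖L j‖ * d j := by
      intro j
      have h1 : (A j).symm x - y = L j (x - A j y) := by
        simp [hLdef, map_sub]
      rw [hedef]
      simp only [h1]
      exact (L j).le_opNorm _
    by_cases hzero : ∃ j, d j = 0
    · obtain ⟨j0, hj0⟩ := hzero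
      have hprod : (∏ j, d j ^ (-(a j))) = 0 := by
        apply Finset.prod_eq_zero (Finset.mem_univ j0)
        rw [hj0, Real.zero_rpow]
        have := ha j0; intro h; rw [neg_eq_zero] at h; linarith
      rw [hprod]
      exact Finset.sum_nonneg fun j _ => hrhs_nonneg j
    · push_neg at hzero
      have hd : ∀ j, 0 < d j := fun j => lt_of_le_of_ne (norm_nonneg _) (Ne.symm (hzero j))
      have he : ∀ j, 0 < e j := by
        intro j
        rcases (norm_nonneg ((A j).symm x - y)).lt_or_eq with h | h
        · exact h
        · exfalso
          have hxy : (A j).symm x = y := by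
            have h2 : ‖(A j).symm x - y‖ = 0 := h.symm
            rw [norm_eq_zero, sub_eq_zero] at h2; exact h2
          apply hzero j
        -- d j = ‖x - A j y‖ = ‖x - A j ((A j).symm x)‖ = 0
          rw [hddef]
          simp only [← hxy, (A j).apply_symm_apply, sub_self, norm_zero]
      obtain ⟨j0, _, hj0min⟩ := Finset.exists_min_image Finset.univ d Finset.univ_nonempty
      have step1 : (∏ j, d j ^ (-(a j))) ≤ d j0 ^ (α - n) := by
        calc (∏ j, d j ^ (-(a j))) ≤ ∏ j, d j0 ^ (-(a j)) := by
              apply Finset.prod_le_prod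
              · intro j _; exact Real.rpow_nonneg (norm_nonneg _) _
              · intro j _
                exact Real.rpow_le_rpow_of_nonpos (hd j0) (hj0min j (Finset.mem_univ j))
                  (neg_nonpos.mpr (ha j).le)
          _ = d j0 ^ (∑ j, -(a j)) := (Real.rpow_sum_of_pos (hd j0) _ _).symm
          _ = d j0 ^ (α - n) := by
              congr 1
              rw [Finset.sum_neg_distrib, hsum]; ring
      have step2 : d j0 ^ (α - n) ≤ M j0 * e j0 ^ (α - n) := by
        have hdiv : e j0 / ‖L j0‖ ≤ d j0 := by
          rw [div_le_iff₀ (hL j0)]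
          calc e j0 ≤ ‖L j0‖ * d j0 := hde j0
            _ = d j0 * ‖L j0‖ := mul_comm _ _
        have hpos : 0 < e j0 / ‖L j0‖ := div_pos (he j0) (hL j0)
        calc d j0 ^ (α - n) ≤ (e j0 / ‖L j0‖) ^ (α - n) :=
              Real.rpow_le_rpow_of_nonpos hpos hdiv (by linarith)
          _ = e j0 ^ (α - n) / ‖L j0‖ ^ (α - n) :=
              Real.div_rpow (he j0).le (hL j0).le _
          _ = e j0 ^ (α - n) * ‖L j0‖ ^ (n - α) := by
              rw [div_eq_mul_inv, ← Real.rpow_neg (hL j0).le]; ring_nf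
          _ = M j0 * e j0 ^ (α - n) := by rw [hMdef]; ring
      calc (∏ j, d j ^ (-(a j))) ≤ M j0 * e j0 ^ (α - n) := step1.trans step2
        _ ≤ ∑ j, M j * e j ^ (α - n) :=
            Finset.single_le_sum (fun j _ => hrhs_nonneg j) (Finset.mem_univ j0)
  -- measurability of the RHS integrands
  have hmeas : ∀ j : Fin m, Measurable fun y : En n =>
      ENNReal.ofReal (‖(A j).symm x - y‖ ^ (α - n) * ‖f y‖) := by
    intro j
    apply ENNReal.measurable_ofReal.comp
    exact (((continuous_const.sub continuous_id).norm.measurable).pow measurable_const).mul hf.norm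
  -- main chain
  have h1 : ENNReal.ofReal ‖∫ y, (∏ j, ‖x - A j y‖ ^ (-(a j))) • f y‖ ≤
      ∫⁻ y, ENNReal.ofReal ((∏ j, ‖x - A j y‖ ^ (-(a j))) * ‖f y‖) := by
    rw [ofReal_norm]
    refine le_trans (enorm_integral_le_lintegral_enorm _) (le_of_eq ?_)
    congr 1
    ext y
    rw [← ofReal_norm, norm_smul, Real.norm_of_nonneg
      (Finset.prod_nonneg fun j _ => Real.rpow_nonneg (norm_nonneg _) _)]
  refine h1.trans ?_
  have h2 : ∀ y : En n, ENNReal.ofReal ((∏ j, ‖x - A j y‖ ^ (-(a j))) * ‖f y‖) ≤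
      ∑ j, ENNReal.ofReal C * ENNReal.ofReal (‖(A j).symm x - y‖ ^ (α - n) * ‖f y‖) := by
    intro y
    calc ENNReal.ofReal ((∏ j, ‖x - A j y‖ ^ (-(a j))) * ‖f y‖)
        ≤ ENNReal.ofReal ((∑ j, M j * ‖(A j).symm x - y‖ ^ (α - n)) * ‖f y‖) :=
          ENNReal.ofReal_le_ofReal (mul_le_mul_of_nonneg_right (key y) (norm_nonneg _))
      _ = ENNReal.ofReal (∑ j, M j * (‖(A j).symm x - y‖ ^ (α - n) * ‖f y‖)) := by
          rw [Finset.sum_mul]; congr 1; apply Finset.sum_congr rfl; intros; ring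
      _ = ∑ j, ENNReal.ofReal (M j * (‖(A j).symm x - y‖ ^ (α - n) * ‖f y‖)) :=
          ENNReal.ofReal_sum_of_nonneg fun j _ => mul_nonneg (hM j).le
            (mul_nonneg (Real.rpow_nonneg (norm_nonneg _) _) (norm_nonneg _))
      _ ≤ ∑ j, ENNReal.ofReal C * ENNReal.ofReal (‖(A j).symm x - y‖ ^ (α - n) * ‖f y‖) := by
          apply Finset.sum_le_sum
          intro j _
          rw [ENNReal.ofReal_mul (hM j).le]
          exact mul_le_mul_left (ENNReal.ofReal_le_ofReal (hMC j)) _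
  calc (∫⁻ y, ENNReal.ofReal ((∏ j, ‖x - A j y‖ ^ (-(a j))) * ‖f y‖))
      ≤ ∫⁻ y, ∑ j, ENNReal.ofReal C * ENNReal.ofReal (‖(A j).symm x - y‖ ^ (α - n) * ‖f y‖) :=
        lintegral_mono h2
    _ = ∑ j, ∫⁻ y, ENNReal.ofReal C * ENNReal.ofReal (‖(A j).symm x - y‖ ^ (α - n) * ‖f y‖) :=
        lintegral_finset_sum' _ fun j _ => (((hmeas j).const_mul _).aemeasurable)
    _ = ∑ j, ENNReal.ofReal C * ∫⁻ y, ENNReal.ofReal (‖(A j).symm x - y‖ ^ (α - n) * ‖f y‖) := by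
        apply Finset.sum_congr rfl
        intro j _
        exact lintegral_const_mul _ (hmeas j)
    _ = ENNReal.ofReal C * ∑ j, ∫⁻ y, ENNReal.ofReal (‖(A j).symm x - y‖ ^ (α - n) * ‖f y‖) :=
        (Finset.mul_sum _ _ _).symm
end

section
/- The function $w : \mathbb{R}^n \to [0,\infty)$ defined by $w(x) = \log(1/|x|)$ for $0 < |x| < 1/e$ and $w(x) = 1$ for $|x| \geq 1/e$ belongs to the Muckenhoupt class $\mathcal{A}_1$, and moreover for every invertible $n \times n$ matrix $A$ there exists $C > 0$ with $w(Ax) \leq C\, w(x)$ for a.e. $x \in \mathbb{R}^n$. -/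
open MeasureTheory Metric ENNReal

section A1Aux

open MeasureTheory Metric ENNReal Filter Set

/-- The weight in question. -/
noncomputable def wt (n : ℕ) (x : En n) : ℝ :=
  if ‖x‖ < (Real.exp 1)⁻¹ then Real.log ‖x‖⁻¹ else 1

lemma wt_eq_max {n : ℕ} {x : En n} (hx : x ≠ 0) :
    wt n x = max 1 (Real.log ‖x‖⁻¹) := by
  have hx0 : 0 < ‖x‖ := norm_pos_iff.2 hx
  rw [wt]
  split_ifs with h
  · have h1 : 1 < Real.log ‖x‖⁻¹ := by
      rw [Real.log_inv]
      have := Real.log_lt_log hx0 h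
      rw [Real.log_inv, Real.log_exp] at this
      linarith
    exact (max_eq_right h1.le).symm
  · have h1 : Real.log ‖x‖⁻¹ ≤ 1 := by
      rw [Real.log_inv]
      have := Real.log_le_log (inv_pos.2 (Real.exp_pos 1)) (not_lt.1 h)
      rw [Real.log_inv, Real.log_exp] at this
      linarith
    exact (max_eq_left h1).symm

lemma wt_nonneg (n : ℕ) (x : En n) : 0 ≤ wt n x := by
  rcases eq_or_ne x 0 with rfl | hx
  · simp [wt, Real.exp_pos]
  · rw [wt_eq_max hx]; exact le_trans zero_le_one (le_max_left _ _)

lemma wt_measurable (n : ℕ) : Measurable (wt n) := by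
  apply Measurable.ite (measurableSet_lt measurable_norm measurable_const)
  · exact Real.measurable_log.comp measurable_norm.inv
  · exact measurable_const

lemma wt_le {n : ℕ} {R : ℝ} (hR : 0 < R) (x : En n) :
    wt n x ≤ max 1 (Real.log R⁻¹) + Real.log (max 1 (R / ‖x‖)) := by
  have hlogmax : 0 ≤ Real.log (max 1 (R / ‖x‖)) := Real.log_nonneg (le_max_left _ _)
  rcases eq_or_ne x 0 with rfl | hx
  · have : wt n 0 = 0 := by simp [wt, Real.exp_pos]
    rw [this]
    have : (0:ℝ) ≤ max 1 (Real.log R⁻¹) := le_trans zero_le_one (le_max_left _ _)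
    linarith
  · have hx0 : 0 < ‖x‖ := norm_pos_iff.2 hx
    rw [wt_eq_max hx]
    apply max_le
    · have : (1:ℝ) ≤ max 1 (Real.log R⁻¹) := le_max_left _ _
      linarith
    · have hmul : ‖x‖⁻¹ = R⁻¹ * (R / ‖x‖) := by field_simp
      rw [hmul, Real.log_mul (inv_ne_zero hR.ne') (div_pos hR hx0).ne']
      have h1 : Real.log R⁻¹ ≤ max 1 (Real.log R⁻¹) := le_max_right _ _
      have h2 : Real.log (R / ‖x‖) ≤ Real.log (max 1 (R / ‖x‖)) :=
        Real.log_le_log (div_pos hR hx0) (le_max_right _ _)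
      linarith

lemma cobdd {α : Type*} [MeasurableSpace α] {μ : Measure α} (hμ : μ ≠ 0) (f : α → ℝ) :
    IsCoboundedUnder (· ≥ ·) (ae μ) f := by
  have hex : ∃ k : ℕ, ¬ ∀ᵐ x ∂μ, (k:ℝ) < f x := by
    by_contra hc
    push_neg at hc
    have hall : ∀ᵐ x ∂μ, ∀ k : ℕ, (k:ℝ) < f x := ae_all_iff.mpr hc
    have hfalse : ∀ᵐ _x ∂μ, False := by
      filter_upwards [hall] with x hx
      obtain ⟨k, hk⟩ := exists_nat_gt (f x)
      exact absurd (hx k) (not_lt.2 hk.le)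
    exact hμ (ae_eq_bot.mp (eventually_false_iff_eq_bot.mp hfalse))
  obtain ⟨k, hk⟩ := hex
  apply IsCoboundedUnder.of_frequently_le (u := f) (a := (k:ℝ))
  rw [Filter.not_eventually] at hk
  exact hk.mono fun x hx => not_lt.1 hx

lemma vol_singleton {n : ℕ} (hn : 0 < n) : volume ({0} : Set (En n)) = 0 := by
  haveI : Nontrivial (En n) := Module.nontrivial_of_finrank_pos (R := ℝ)
    (by rw [finrank_euclideanSpace_fin]; exact hn)
  haveI := Module.punctured_nhds_neBot ℝ (En n)
  exact measure_singleton 0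

lemma ae_ne_zero {n : ℕ} (hn : 0 < n) : ∀ᵐ y : En n ∂volume, y ≠ 0 := by
  rw [ae_iff]
  convert vol_singleton hn using 2
  ext y; simp

lemma essInf_wt_ge {n : ℕ} (hn : 0 < n) (x₀ : En n) {r : ℝ} (hr : 0 < r) :
    max 1 (Real.log (‖x₀‖ + r)⁻¹) ≤ essInf (wt n) (volume.restrict (ball x₀ r)) := by
  set μ := volume.restrict (ball x₀ r) with hμdef
  have hμ : μ ≠ 0 := by
    intro h
    have : μ (ball x₀ r) = volume (ball x₀ r) := Measure.restrict_apply_self _ _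
    rw [h] at this
    exact (measure_ball_pos volume x₀ hr).ne' this.symm
  have hR : 0 < ‖x₀‖ + r := by positivity
  refine Filter.le_liminf_of_le (cobdd hμ _) ?_
  filter_upwards [ae_restrict_mem measurableSet_ball, ae_restrict_of_ae (ae_ne_zero hn)]
    with y hy hy0
  rw [wt_eq_max hy0]
  refine max_le_max le_rfl ?_
  have hy0' : 0 < ‖y‖ := norm_pos_iff.2 hy0
  have hyR : ‖y‖ ≤ ‖x₀‖ + r := by
    have h1 : dist y x₀ < r := mem_ball.1 hy
    have h2 : ‖y‖ ≤ ‖x₀‖ + dist y x₀ := by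
      rw [dist_eq_norm]
      calc ‖y‖ = ‖x₀ + (y - x₀)‖ := by rw [add_sub_cancel]
        _ ≤ ‖x₀‖ + ‖y - x₀‖ := norm_add_le _ _
    linarith
  exact Real.log_le_log (inv_pos.2 hR) (by
    rw [inv_le_inv₀ hR hy0']
    exact hyR)

lemma lintegral_logplus {n : ℕ} (hn : 0 < n) {R : ℝ} (hR : 0 < R) :
    ∫⁻ y in ball (0 : En n) R, ENNReal.ofReal (Real.log (max 1 (R / ‖y‖)))
      ≤ volume (ball (0 : En n) R) := by
  set V := volume (ball (0 : En n) 1) with hV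
  have hVne : V ≠ ⊤ := measure_ball_lt_top.ne
  have hcne : ENNReal.ofReal (R ^ n) * V ≠ ⊤ := ENNReal.mul_ne_top ofReal_ne_top hVne
  have mble : AEMeasurable (fun y : En n => Real.log (max 1 (R / ‖y‖)))
      (volume.restrict (ball 0 R)) :=
    (Real.measurable_log.comp (measurable_const.max
      (measurable_const.div measurable_norm))).aemeasurable
  rw [lintegral_eq_lintegral_meas_lt _
    (Eventually.of_forall fun y => Real.log_nonneg (le_max_left _ _)) mble]
  have key : ∀ t ∈ Ioi (0:ℝ),
      (volume.restrict (ball (0:En n) R)) {y : En n | t < Real.log (max 1 (R / ‖y‖))}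
        ≤ ENNReal.ofReal (R ^ n * Real.exp (-t)) * V := by
    intro t ht
    have ht0 : (0:ℝ) < t := ht
    have hRe : 0 < R * Real.exp (-t) := by positivity
    have hsub : {y : En n | t < Real.log (max 1 (R / ‖y‖))}
        ⊆ ball (0:En n) (R * Real.exp (-t)) := by
      intro y hy
      simp only [mem_setOf_eq] at hy
      have hmaxpos : 0 < max 1 (R / ‖y‖) := lt_of_lt_of_le one_pos (le_max_left _ _)
      have hexp : Real.exp t < max 1 (R / ‖y‖) := (Real.lt_log_iff_exp_lt hmaxpos).1 hy
      have h1 : Real.exp t < R / ‖y‖ := by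
        rcases lt_max_iff.1 hexp with h | h
        · exact absurd h (not_lt.2 (Real.one_le_exp ht0.le))
        · exact h
      have hy0 : 0 < ‖y‖ := by
        have hpos : 0 < R / ‖y‖ := (Real.exp_pos t).trans h1
        rcases div_pos_iff.1 hpos with ⟨_, h⟩ | ⟨hR', _⟩
        · exact h
        · linarith
      rw [mem_ball_zero_iff, Real.exp_neg, ← div_eq_mul_inv,
        lt_div_iff₀ (Real.exp_pos t)]
      have h2 := (lt_div_iff₀ hy0).1 h1
      nlinarith
    calc (volume.restrict (ball (0:En n) R)) {y : En n | t < Real.log (max 1 (R / ‖y‖))}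
        ≤ volume {y : En n | t < Real.log (max 1 (R / ‖y‖))} :=
          Measure.restrict_le_self _
      _ ≤ volume (ball (0:En n) (R * Real.exp (-t))) := measure_mono hsub
      _ = ENNReal.ofReal ((R * Real.exp (-t)) ^ n) * V := by
          rw [Measure.addHaar_ball_of_pos volume _ hRe, finrank_euclideanSpace_fin]
      _ ≤ ENNReal.ofReal (R ^ n * Real.exp (-t)) * V := by
          gcongr
          rw [mul_pow]
          gcongr
          calc Real.exp (-t) ^ n ≤ Real.exp (-t) ^ 1 :=
                pow_le_pow_of_le_one (Real.exp_pos _).le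
                  (Real.exp_le_one_iff.2 (by linarith)) hn
            _ = Real.exp (-t) := pow_one _
  calc ∫⁻ t in Ioi (0:ℝ),
        (volume.restrict (ball (0:En n) R)) {y : En n | t < Real.log (max 1 (R / ‖y‖))}
      ≤ ∫⁻ t in Ioi (0:ℝ), ENNReal.ofReal (R ^ n) * V * ENNReal.ofReal (Real.exp (-t)) := by
        refine setLIntegral_mono' measurableSet_Ioi fun t ht => ?_
        calc (volume.restrict (ball (0:En n) R)) {y : En n | t < Real.log (max 1 (R / ‖y‖))}
            ≤ ENNReal.ofReal (R ^ n * Real.exp (-t)) * V := key t ht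
          _ = ENNReal.ofReal (R ^ n) * V * ENNReal.ofReal (Real.exp (-t)) := by
              rw [ENNReal.ofReal_mul (by positivity), mul_right_comm]
    _ = ENNReal.ofReal (R ^ n) * V * ∫⁻ t in Ioi (0:ℝ), ENNReal.ofReal (Real.exp (-t)) :=
        lintegral_const_mul' _ _ hcne
    _ ≤ ENNReal.ofReal (R ^ n) * V * 1 := by
        gcongr
        have hint : IntegrableOn (fun x : ℝ => Real.exp (-x)) (Ioi (0:ℝ)) := by
          simpa using exp_neg_integrableOn_Ioi 0 one_pos
        rw [← MeasureTheory.ofReal_integral_eq_lintegral_ofReal hint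
          (Eventually.of_forall fun x => (Real.exp_pos _).le)]
        rw [integral_exp_neg_Ioi_zero]
        simp
    _ = volume (ball (0:En n) R) := by
        rw [mul_one, Measure.addHaar_ball_of_pos volume _ hR, finrank_euclideanSpace_fin]

lemma lintegral_wt_ball {n : ℕ} (hn : 0 < n) (x₀ : En n) {r : ℝ} (hr : 0 < r) :
    ∫⁻ y in ball x₀ r, ENNReal.ofReal (wt n y)
      ≤ ENNReal.ofReal (1 + 3 ^ n) *
        ENNReal.ofReal (max 1 (Real.log (‖x₀‖ + r)⁻¹)) * volume (ball x₀ r) := by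
  have hR : 0 < ‖x₀‖ + r := by positivity
  set R := ‖x₀‖ + r with hRdef
  set m := max 1 (Real.log R⁻¹) with hmdef
  have hm1 : (1:ℝ) ≤ m := le_max_left _ _
  have hm0 : (0:ℝ) ≤ m := zero_le_one.trans hm1
  have hmE : (1:ℝ≥0∞) ≤ ENNReal.ofReal m := by
    rw [← ENNReal.ofReal_one]; exact ENNReal.ofReal_le_ofReal hm1
  have hlog_nonneg : ∀ y : En n, 0 ≤ Real.log (max 1 (R / ‖y‖)) :=
    fun y => Real.log_nonneg (le_max_left _ _)
  have step1 : ∫⁻ y in ball x₀ r, ENNReal.ofReal (wt n y)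
      ≤ ENNReal.ofReal m * volume (ball x₀ r) +
        ∫⁻ y in ball x₀ r, ENNReal.ofReal (Real.log (max 1 (R / ‖y‖))) := by
    calc ∫⁻ y in ball x₀ r, ENNReal.ofReal (wt n y)
        ≤ ∫⁻ y in ball x₀ r,
            (ENNReal.ofReal m + ENNReal.ofReal (Real.log (max 1 (R / ‖y‖)))) := by
          refine lintegral_mono fun y => ?_
          rw [← ENNReal.ofReal_add hm0 (hlog_nonneg y)]
          exact ENNReal.ofReal_le_ofReal (wt_le hR y)
      _ = ENNReal.ofReal m * volume (ball x₀ r) +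
            ∫⁻ y in ball x₀ r, ENNReal.ofReal (Real.log (max 1 (R / ‖y‖))) := by
          rw [lintegral_add_left measurable_const, setLIntegral_const, mul_comm]
  have step2 : ∫⁻ y in ball x₀ r, ENNReal.ofReal (Real.log (max 1 (R / ‖y‖)))
      ≤ ENNReal.ofReal (3 ^ n) * volume (ball x₀ r) := by
    rcases le_or_gt ‖x₀‖ (2 * r) with hcase | hcase
    · have hsub : ball x₀ r ⊆ ball (0 : En n) R := by
        intro y hy
        rw [mem_ball_zero_iff]
        have h1 : dist y x₀ < r := mem_ball.1 hy
        have h2 : ‖y‖ - ‖x₀‖ ≤ ‖y - x₀‖ := by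
          have := abs_norm_sub_norm_le y x₀
          linarith [(abs_le.1 this).2]
        rw [dist_eq_norm] at h1
        rw [hRdef]; linarith
      calc ∫⁻ y in ball x₀ r, ENNReal.ofReal (Real.log (max 1 (R / ‖y‖)))
          ≤ ∫⁻ y in ball (0:En n) R, ENNReal.ofReal (Real.log (max 1 (R / ‖y‖))) :=
            lintegral_mono_set hsub
        _ ≤ volume (ball (0:En n) R) := lintegral_logplus hn hR
        _ = ENNReal.ofReal (R ^ n) * volume (ball (0:En n) 1) := by
            rw [Measure.addHaar_ball_of_pos volume _ hR, finrank_euclideanSpace_fin]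
        _ ≤ ENNReal.ofReal (3 ^ n * r ^ n) * volume (ball (0:En n) 1) := by
            gcongr
            calc R ^ n ≤ (3 * r) ^ n :=
                  pow_le_pow_left₀ hR.le (by rw [hRdef]; linarith) n
              _ = 3 ^ n * r ^ n := mul_pow _ _ _
        _ = ENNReal.ofReal (3 ^ n) * (ENNReal.ofReal (r ^ n) * volume (ball (0:En n) 1)) := by
            rw [ENNReal.ofReal_mul (by positivity), mul_assoc]
        _ = ENNReal.ofReal (3 ^ n) * volume (ball x₀ r) := by
            rw [Measure.addHaar_ball_of_pos volume _ hr, finrank_euclideanSpace_fin]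
    · have hbd : ∀ y ∈ ball x₀ r,
          ENNReal.ofReal (Real.log (max 1 (R / ‖y‖))) ≤ ENNReal.ofReal (3 ^ n) := by
        intro y hy
        apply ENNReal.ofReal_le_ofReal
        have h1 : dist y x₀ < r := mem_ball.1 hy
        rw [dist_eq_norm] at h1
        have h2 : ‖x₀‖ - ‖y‖ ≤ ‖y - x₀‖ := by
          have := abs_norm_sub_norm_le y x₀
          linarith [(abs_le.1 this).1]
        have hy0 : 0 < ‖y‖ := by linarith
        have h3 : R / ‖y‖ < 3 := by
          rw [div_lt_iff₀ hy0, hRdef]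
          linarith
        have h4 : max 1 (R / ‖y‖) ≤ 3 := max_le (by norm_num) h3.le
        calc Real.log (max 1 (R / ‖y‖)) ≤ Real.log 3 :=
              Real.log_le_log (lt_of_lt_of_le one_pos (le_max_left _ _)) h4
          _ ≤ 3 - 1 := Real.log_le_sub_one_of_pos (by norm_num)
          _ ≤ 3 ^ n := by
              calc (3:ℝ) - 1 ≤ 3 ^ 1 := by norm_num
                _ ≤ 3 ^ n := pow_le_pow_right₀ (by norm_num) hn
      calc ∫⁻ y in ball x₀ r, ENNReal.ofReal (Real.log (max 1 (R / ‖y‖)))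
          ≤ ∫⁻ _y in ball x₀ r, ENNReal.ofReal (3 ^ n) :=
            setLIntegral_mono' measurableSet_ball hbd
        _ = ENNReal.ofReal (3 ^ n) * volume (ball x₀ r) := by
            rw [setLIntegral_const]
  calc ∫⁻ y in ball x₀ r, ENNReal.ofReal (wt n y)
      ≤ ENNReal.ofReal m * volume (ball x₀ r) +
          ENNReal.ofReal (3 ^ n) * volume (ball x₀ r) :=
        step1.trans (add_le_add_right step2 _)
    _ ≤ ENNReal.ofReal m * volume (ball x₀ r) +
          ENNReal.ofReal (3 ^ n) * (ENNReal.ofReal m * volume (ball x₀ r)) :=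
        add_le_add le_rfl (mul_le_mul_right
          (le_mul_of_one_le_left zero_le hmE) _)
    _ = (1 + ENNReal.ofReal (3 ^ n)) * (ENNReal.ofReal m * volume (ball x₀ r)) := by
        ring
    _ = ENNReal.ofReal (1 + 3 ^ n) * ENNReal.ofReal m * volume (ball x₀ r) := by
        rw [ENNReal.ofReal_add zero_le_one (by positivity), ENNReal.ofReal_one, mul_assoc]

lemma wt_integrableOn_ball {n : ℕ} (hn : 0 < n) (x₀ : En n) {r : ℝ} (hr : 0 < r) :
    IntegrableOn (wt n) (ball x₀ r) := by
  refine ⟨(wt_measurable n).aestronglyMeasurable.restrict, ?_⟩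
  rw [hasFiniteIntegral_iff_ofReal (Eventually.of_forall (wt_nonneg n))]
  refine lt_of_le_of_lt (lintegral_wt_ball hn x₀ hr) ?_
  exact ENNReal.mul_lt_top
    (ENNReal.mul_lt_top ENNReal.ofReal_lt_top ENNReal.ofReal_lt_top) measure_ball_lt_top

end A1Aux

open MeasureTheory in
/-- the weight `w(x) = log(1/|x|)` for `|x| < 1/e`, `w(x) = 1` otherwise,
belongs to `𝒜₁` and satisfies `w(Ax) ≲ w(x)` for every invertible matrix `A`. -/
theorem stmt7 {n : ℕ} (hn : 0 < n) :
    IsA1 n (fun x : En n => if ‖x‖ < (Real.exp 1)⁻¹ then Real.log ‖x‖⁻¹ else 1) ∧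
    ∀ A : En n ≃L[ℝ] En n, ∃ C > 0, ∀ᵐ x : En n,
      (if ‖A x‖ < (Real.exp 1)⁻¹ then Real.log ‖A x‖⁻¹ else 1) ≤
        C * (if ‖x‖ < (Real.exp 1)⁻¹ then Real.log ‖x‖⁻¹ else 1) := by
  have hwt : (fun x : En n => if ‖x‖ < (Real.exp 1)⁻¹ then Real.log ‖x‖⁻¹ else 1) = wt n := rfl
  constructor
  · rw [hwt]
    refine ⟨wt_nonneg n, ?_, 1 + 3 ^ n, by positivity, ?_⟩
    · intro x
      exact ⟨ball x 1, ball_mem_nhds x one_pos, wt_integrableOn_ball hn x one_pos⟩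
    · intro x r hr
      have h1 : ∫ y in ball x r, wt n y
          = (∫⁻ y in ball x r, ENNReal.ofReal (wt n y)).toReal :=
        integral_eq_lintegral_of_nonneg_ae (Filter.Eventually.of_forall (wt_nonneg n))
          (wt_measurable n).aestronglyMeasurable.restrict
      have h2 := lintegral_wt_ball hn x hr
      have hm0 : (0:ℝ) ≤ max 1 (Real.log (‖x‖ + r)⁻¹) :=
        zero_le_one.trans (le_max_left _ _)
      have hRne : ENNReal.ofReal (1 + 3 ^ n) *
          ENNReal.ofReal (max 1 (Real.log (‖x‖ + r)⁻¹)) * volume (ball x r) ≠ ⊤ :=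
        ENNReal.mul_ne_top (ENNReal.mul_ne_top ofReal_ne_top ofReal_ne_top)
          measure_ball_lt_top.ne
      have h3 := ENNReal.toReal_mono hRne h2
      rw [← h1] at h3
      have h4 : (ENNReal.ofReal (1 + 3 ^ n) *
          ENNReal.ofReal (max 1 (Real.log (‖x‖ + r)⁻¹)) * volume (ball x r)).toReal
          = (1 + 3 ^ n) * max 1 (Real.log (‖x‖ + r)⁻¹) * (volume (ball x r)).toReal := by
        rw [ENNReal.toReal_mul, ENNReal.toReal_mul,
          ENNReal.toReal_ofReal (by positivity), ENNReal.toReal_ofReal hm0]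
      rw [h4] at h3
      have h5 := essInf_wt_ge hn x hr
      have hC : (0:ℝ) ≤ (1 + 3 ^ n) * (volume (ball x r)).toReal := by positivity
      calc ∫ y in ball x r, wt n y
          ≤ (1 + 3 ^ n) * max 1 (Real.log (‖x‖ + r)⁻¹) * (volume (ball x r)).toReal := h3
        _ = ((1 + 3 ^ n) * (volume (ball x r)).toReal) * max 1 (Real.log (‖x‖ + r)⁻¹) := by
            ring
        _ ≤ ((1 + 3 ^ n) * (volume (ball x r)).toReal) *
              essInf (wt n) (volume.restrict (ball x r)) :=
            mul_le_mul_of_nonneg_left h5 hC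
        _ = (1 + 3 ^ n) * (volume (ball x r)).toReal *
              essInf (wt n) (volume.restrict (ball x r)) := by ring
  · intro A
    set c := ‖(A.symm : En n →L[ℝ] En n)‖ with hcdef
    refine ⟨1 + max 0 (Real.log c), by positivity, ?_⟩
    filter_upwards [ae_ne_zero hn] with x hx
    have hAx : A x ≠ 0 := fun h => hx (A.map_eq_zero_iff.1 h)
    show wt n (A x) ≤ (1 + max 0 (Real.log c)) * wt n x
    rw [wt_eq_max hAx, wt_eq_max hx]
    set M := max 1 (Real.log ‖x‖⁻¹) with hMdef
    have hM1 : (1:ℝ) ≤ M := le_max_left _ _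
    have hx0 : 0 < ‖x‖ := norm_pos_iff.2 hx
    have hAx0 : 0 < ‖A x‖ := norm_pos_iff.2 hAx
    have hxc : ‖x‖ ≤ c * ‖A x‖ := by
      calc ‖x‖ = ‖A.symm (A x)‖ := by rw [A.symm_apply_apply]
        _ ≤ c * ‖A x‖ := (A.symm : En n →L[ℝ] En n).le_opNorm _
    have hcpos : 0 < c := by nlinarith
    have hinv : ‖A x‖⁻¹ ≤ c * ‖x‖⁻¹ := by
      have hdiv : ‖x‖ / c ≤ ‖A x‖ := by
        rw [div_le_iff₀ hcpos]; nlinarith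
      have heq : c * ‖x‖⁻¹ = (‖x‖ / c)⁻¹ := by
        rw [inv_div]; ring
      rw [heq, inv_le_inv₀ hAx0 (by positivity)]
      exact hdiv
    have hlog : Real.log ‖A x‖⁻¹ ≤ Real.log c + Real.log ‖x‖⁻¹ := by
      rw [← Real.log_mul hcpos.ne' (inv_ne_zero hx0.ne')]
      exact Real.log_le_log (inv_pos.2 hAx0) hinv
    have hmc : (0:ℝ) ≤ max 0 (Real.log c) := le_max_left _ _
    have hmc2 : Real.log c ≤ max 0 (Real.log c) := le_max_right _ _
    have hM2 : Real.log ‖x‖⁻¹ ≤ M := le_max_right _ _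
    apply max_le
    · nlinarith
    · nlinarith
end
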